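/- Let G be a connected proper interval graph on {1,…,n} and let C be a positive integer. Then the partition of {1,…,n} whose parts are the blocks [(i−1)C+1, min(n, iC)] for i = 1, …, ⌈n/C⌉ is a [⌈(ω(G)+C−1)/C⌉, C]-block partition of G. -/

import Mathlib

/-- Reachability inside a set `S`: there is a walk from `u` to `v` all of whose
vertices lie in `S`. -/
def ReachIn {α : Type*} (G : SimpleGraph α) (S : Set α) (u v : α) : Prop :=
  Relation.ReflTransGen (fun a b => G.Adj a b ∧ a ∈ S ∧ b ∈ S) u v

/-- The subgraph induced by `S` is connected. -/
def ConnectedIn {α : Type*} (G : SimpleGraph α) (S : Set α) : Prop :=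
  ∀ u ∈ S, ∀ v ∈ S, ReachIn G S u v

/-- `G` is a graph on the vertex set `{1,…,n}`. -/
def OnRange (n : ℕ) (G : SimpleGraph ℕ) : Prop :=
  ∀ u v : ℕ, G.Adj u v → u ∈ Set.Icc 1 n ∧ v ∈ Set.Icc 1 n

/-- The umbrella property characterising proper interval graphs. -/
def Umbrella (G : SimpleGraph ℕ) : Prop :=
  ∀ u v w : ℕ, u < v → v < w → G.Adj u w → G.Adj u v ∧ G.Adj v w

/-- `Ps` is a partition of the vertex set `{1,…,n}`. -/
def IsPartitionOf (n : ℕ) (Ps : Set (Set ℕ)) : Prop :=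
  (∀ P ∈ Ps, P.Nonempty) ∧ Ps.PairwiseDisjoint id ∧ ⋃₀ Ps = Set.Icc 1 n

/-- A `[λ,C]`-partition of the graph `G` on `{1,…,n}`: every part induces a
connected subgraph, every part has at most `C` vertices, and every clique
meets at most `L` parts. -/
def IsLCPartition (n : ℕ) (G : SimpleGraph ℕ) (L C : ℕ) (Ps : Set (Set ℕ)) : Prop :=
  IsPartitionOf n Ps ∧ (∀ P ∈ Ps, ConnectedIn G P ∧ P.ncard ≤ C) ∧
    ∀ K : Set ℕ, G.IsClique K → {P ∈ Ps | (P ∩ K).Nonempty}.ncard ≤ L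

/-- A block: a set of consecutive vertices `{u, u+1, …, v}` with `1 ≤ u ≤ v`. -/
def IsBlockSet (P : Set ℕ) : Prop := ∃ u v : ℕ, 1 ≤ u ∧ u ≤ v ∧ P = Set.Icc u v

/-- A `[λ,C]`-block partition: a `[λ,C]`-partition all of whose parts are blocks. -/
def IsLCBlockPartition (n : ℕ) (G : SimpleGraph ℕ) (L C : ℕ) (Ps : Set (Set ℕ)) : Prop :=
  IsLCPartition n G L C Ps ∧ ∀ P ∈ Ps, IsBlockSet P

/-- A `[λ,C]`-coloring of the graph `G` on `{1,…,n}` with colors `Fin L`: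
every monochromatic component has at most `C` vertices. -/
def IsLCColoring (n : ℕ) (G : SimpleGraph ℕ) (C : ℕ) {L : ℕ} (c : ℕ → Fin L) : Prop :=
  ∀ v ∈ Set.Icc 1 n, {u | ReachIn G {w | c w = c v} v u}.ncard ≤ C

/-- The clique number of `G`. -/
noncomputable def cliqueNumber (G : SimpleGraph ℕ) : ℕ :=
  sSup {m | ∃ s : Finset ℕ, G.IsNClique m s}

/-- The graph `G` on `{1,…,n}` is connected. -/
def ConnectedOn (n : ℕ) (G : SimpleGraph ℕ) : Prop :=
  ConnectedIn G (Set.Icc 1 n)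


private lemma cross_cut {r : ℕ → ℕ → Prop} {x y u : ℕ}
    (h : Relation.ReflTransGen r x y) :
    x ≤ u → u < y → ∃ a b, r a b ∧ a ≤ u ∧ u < b := by
  induction h with
  | refl => intro hx hy; omega
  | @tail c d _ step ih =>
    intro hx hy
    by_cases hc : c ≤ u
    · exact ⟨c, d, step, hc, hy⟩
    · exact ih hx (by omega)

private lemma consec_adj {n : ℕ} {G : SimpleGraph ℕ} (humb : Umbrella G)
    (hconn : ConnectedOn n G) {u : ℕ} (h1 : 1 ≤ u) (h2 : u < n) :
    G.Adj u (u + 1) := by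
  have hreach : ReachIn G (Set.Icc 1 n) u n :=
    hconn u ⟨h1, le_of_lt h2⟩ n ⟨by omega, le_refl n⟩
  obtain ⟨a, b, ⟨hab, _, _⟩, hau, hub⟩ := cross_cut hreach (le_refl u) h2
  rcases eq_or_lt_of_le hau with rfl | hau
  · rcases (by omega : a + 1 = b ∨ a + 1 < b) with rfl | hb
    · exact hab
    · exact (humb a (a + 1) b (by omega) hb hab).1
  · have h3 := (humb a u b hau hub hab).2
    rcases (by omega : u + 1 = b ∨ u + 1 < b) with rfl | hb
    · exact h3
    · exact (humb u (u + 1) b (by omega) hb h3).1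

private lemma reach_up {n : ℕ} {G : SimpleGraph ℕ} (humb : Umbrella G)
    (hconn : ConnectedOn n G) {l r : ℕ} (hl : 1 ≤ l) (hr : r ≤ n) :
    ∀ v, l ≤ v → v ≤ r → ReachIn G (Set.Icc l r) l v := by
  intro v
  induction v with
  | zero => intro h1 _; omega
  | succ w ih =>
    intro hlv hvr
    rcases (by omega : l = w + 1 ∨ l ≤ w) with rfl | hlw
    · exact Relation.ReflTransGen.refl
    · refine Relation.ReflTransGen.tail (ih hlw (by omega)) ?_
      exact ⟨consec_adj humb hconn (by omega) (by omega),
        ⟨hlw, by omega⟩, ⟨by omega, hvr⟩⟩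

private lemma connectedIn_Icc {n : ℕ} {G : SimpleGraph ℕ} (humb : Umbrella G)
    (hconn : ConnectedOn n G) {l r : ℕ} (hl : 1 ≤ l) (hr : r ≤ n) :
    ConnectedIn G (Set.Icc l r) := by
  intro u hu v hv
  have hsymm : Symmetric (fun a b => G.Adj a b ∧ a ∈ Set.Icc l r ∧ b ∈ Set.Icc l r) :=
    fun a b ⟨h, ha, hb⟩ => ⟨h.symm, hb, ha⟩
  have h1 := reach_up humb hconn hl hr u hu.1 hu.2
  have h2 := reach_up humb hconn hl hr v hv.1 hv.2
  exact Relation.ReflTransGen.trans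
    ((@Relation.ReflTransGen.symmetric _ _ ⟨fun _ _ h => hsymm h⟩).symm _ _ h1) h2

private lemma icc_isClique {G : SimpleGraph ℕ} (humb : Umbrella G)
    {a b : ℕ} (_hab : a < b) (hadj : G.Adj a b) : G.IsClique (Set.Icc a b) := by
  have key : ∀ x y, a ≤ x → x < y → y ≤ b → G.Adj x y := by
    intro x y hax hxy hyb
    have hxb : G.Adj x b := by
      rcases eq_or_lt_of_le hax with heq | hax'
      · rw [← heq]; exact hadj
      · exact (humb a x b hax' (by omega) hadj).2
    rcases eq_or_lt_of_le hyb with heq | hyb'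
    · rw [heq]; exact hxb
    · exact (humb x y b hxy hyb' hxb).1
  intro x hx y hy hxy
  rcases lt_or_gt_of_ne hxy with h | h
  · exact key x y hx.1 h hy.2
  · exact (key y x hy.1 h hx.2).symm

private lemma cliqueNumber_bddAbove {n : ℕ} {G : SimpleGraph ℕ}
    (hrange : OnRange n G) (hn : 0 < n) :
    BddAbove {m | ∃ s : Finset ℕ, G.IsNClique m s} := by
  refine ⟨n, fun m hm => ?_⟩
  obtain ⟨s, hs⟩ := hm
  rcases (by omega : m ≤ 1 ∨ 2 ≤ m) with h | h
  · omega
  · have hsub : s ⊆ Finset.Icc 1 n := by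
      intro x hx
      obtain ⟨y, hy, hyx⟩ := Finset.exists_mem_ne
        (by rw [hs.card_eq]; omega) x
      have hadj : G.Adj x y := (hs.isClique hx hy (Ne.symm hyx)).symm.symm
      have := (hrange x y hadj).1
      simpa [Finset.mem_Icc] using this
    calc m = s.card := hs.card_eq.symm
      _ ≤ (Finset.Icc 1 n).card := Finset.card_le_card hsub
      _ = n := by rw [Nat.card_Icc]; omega

private lemma one_le_cliqueNumber {n : ℕ} {G : SimpleGraph ℕ}
    (hrange : OnRange n G) (hn : 0 < n) : 1 ≤ cliqueNumber G := by
  apply le_csSup (cliqueNumber_bddAbove hrange hn)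
  exact ⟨{1}, by simp [SimpleGraph.isNClique_iff, SimpleGraph.isClique_iff,
    Set.Pairwise]⟩

private lemma card_le_cliqueNumber {n : ℕ} {G : SimpleGraph ℕ}
    (hrange : OnRange n G) (hn : 0 < n) (humb : Umbrella G)
    {a b : ℕ} (hab : a < b) (hadj : G.Adj a b) :
    b + 1 - a ≤ cliqueNumber G := by
  apply le_csSup (cliqueNumber_bddAbove hrange hn)
  refine ⟨Finset.Icc a b, ?_, ?_⟩
  · rw [Finset.coe_Icc]
    exact icc_isClique humb hab hadj
  · rw [Nat.card_Icc]


/-- for a connected proper interval graph on `{1,…,n}`, the partition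
into the blocks `[(i-1)C+1, min n (iC)]`, `i = 1,…,⌈n/C⌉`, is a
`[⌈(ω(G)+C-1)/C⌉, C]`-block partition (ceilings written with natural division). -/
theorem simplePart_is_blockPartition (n : ℕ) (G : SimpleGraph ℕ)
    (hrange : OnRange n G) (humb : Umbrella G) (hconn : ConnectedOn n G)
    (hn : 0 < n) (C : ℕ) (hC : 0 < C) :
    IsLCBlockPartition n G ((cliqueNumber G + C - 1 + C - 1) / C) C
      {P : Set ℕ | ∃ i : ℕ, 1 ≤ i ∧ i ≤ (n + C - 1) / C ∧
        P = Set.Icc ((i - 1) * C + 1) (min n (i * C))} := by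
  classical
  set m := (n + C - 1) / C with hm
  set L := (cliqueNumber G + C - 1 + C - 1) / C with hL
  set blk : ℕ → Set ℕ := fun i => Set.Icc ((i - 1) * C + 1) (min n (i * C)) with hblk
  set Ps : Set (Set ℕ) := {P : Set ℕ | ∃ i : ℕ, 1 ≤ i ∧ i ≤ m ∧ P = blk i} with hPs
  have hω : 1 ≤ cliqueNumber G := one_le_cliqueNumber hrange hn
  -- basic arithmetic about blocks
  have hmul : ∀ k : ℕ, (k + 1) * C = k * C + C := fun k => by ring
  have hlb : ∀ k : ℕ, k + 1 ≤ m → k * C + 1 ≤ min n ((k + 1) * C) := by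
    intro k hk
    have h1 : (k + 1) * C ≤ n + C - 1 := (Nat.le_div_iff_mul_le hC).mp hk
    have h2 := hmul k
    omega
  have hblk' : ∀ k : ℕ, blk (k + 1) = Set.Icc (k * C + 1) (min n ((k + 1) * C)) := by
    intro k; rfl
  -- membership: each v ∈ [1,n] lies in blk ((v-1)/C + 1)
  have hmem : ∀ v, 1 ≤ v → v ≤ n →
      1 ≤ (v - 1) / C + 1 ∧ (v - 1) / C + 1 ≤ m ∧ v ∈ blk ((v - 1) / C + 1) := by
    intro v h1 h2
    have hdm := Nat.div_add_mod (v - 1) C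
    have hmod : (v - 1) % C < C := Nat.mod_lt _ hC
    have hcomm : C * ((v - 1) / C) = (v - 1) / C * C := Nat.mul_comm _ _
    have hmulk := hmul ((v - 1) / C)
    have hkm : (v - 1) / C + 1 ≤ m := by
      have h3 : (v - 1 + C) / C = (v - 1) / C + 1 := Nat.add_div_right _ hC
      rw [hm, ← h3]
      exact Nat.div_le_div_right (by omega)
    refine ⟨Nat.le_add_left 1 _, hkm, ?_⟩
    rw [hblk' ((v - 1) / C)]
    simp only [Set.mem_Icc]
    omega
  constructor
  · constructor
    · -- partition
      refine ⟨?_, ?_, ?_⟩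
      · -- nonempty
        rintro P ⟨i, hi1, hi2, rfl⟩
        obtain ⟨k, rfl⟩ : ∃ k, i = k + 1 := ⟨i - 1, by omega⟩
        rw [hblk' k]
        exact Set.nonempty_Icc.mpr (hlb k hi2)
      · -- pairwise disjoint
        rintro P ⟨i, hi1, hi2, rfl⟩ Q ⟨j, hj1, hj2, rfl⟩ hPQ
        obtain ⟨k, rfl⟩ : ∃ k, i = k + 1 := ⟨i - 1, by omega⟩
        obtain ⟨l, rfl⟩ : ∃ l, j = l + 1 := ⟨j - 1, by omega⟩
        have hkl : k ≠ l := fun h => hPQ (by rw [h])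
        have key : ∀ k l : ℕ, k < l → l + 1 ≤ m →
            Disjoint (blk (k + 1)) (blk (l + 1)) := by
          intro k l hkl' hlm
          rw [hblk' k, hblk' l, Set.disjoint_left]
          intro x hx1 hx2
          simp only [Set.mem_Icc] at hx1 hx2
          have h3 : (k + 1) * C ≤ l * C := Nat.mul_le_mul_right C (by omega)
          have := hmul k
          omega
        rcases lt_or_gt_of_ne hkl with h | h
        · exact key k l h hj2
        · exact (key l k h hi2).symm
      · -- union
        apply Set.eq_of_subset_of_subset
        · rintro x ⟨P, ⟨i, hi1, hi2, rfl⟩, hx⟩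
          obtain ⟨k, rfl⟩ : ∃ k, i = k + 1 := ⟨i - 1, by omega⟩
          rw [hblk' k] at hx
          simp only [Set.mem_Icc] at hx ⊢
          omega
        · intro v hv
          simp only [Set.mem_Icc] at hv
          obtain ⟨ha, hb, hc⟩ := hmem v hv.1 hv.2
          exact ⟨blk ((v - 1) / C + 1), ⟨(v - 1) / C + 1, ha, hb, rfl⟩, hc⟩
    · constructor
      · -- connected and small
        rintro P ⟨i, hi1, hi2, rfl⟩
        obtain ⟨k, rfl⟩ : ∃ k, i = k + 1 := ⟨i - 1, by omega⟩
        rw [hblk' k]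
        constructor
        · exact connectedIn_Icc humb hconn (by omega) (by omega)
        · rw [← Finset.coe_Icc, Set.ncard_coe_finset, Nat.card_Icc]
          have := hmul k
          omega
      · -- clique count
        intro K hK
        set S := {P ∈ Ps | (P ∩ K).Nonempty} with hS
        rcases Set.eq_empty_or_nonempty S with he | hne
        · rw [he]; simp
        set I := {i : ℕ | 1 ≤ i ∧ i ≤ m ∧ (blk i ∩ K).Nonempty} with hI
        have hSI : S = blk '' I := by
          apply Set.eq_of_subset_of_subset
          · rintro P ⟨⟨i, hi1, hi2, rfl⟩, hint⟩
            exact ⟨i, ⟨hi1, hi2, hint⟩, rfl⟩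
          · rintro P ⟨i, ⟨hi1, hi2, hint⟩, rfl⟩
            exact ⟨⟨i, hi1, hi2, rfl⟩, hint⟩
        have hIsub : I ⊆ Set.Icc 1 m := fun i hi => ⟨hi.1, hi.2.1⟩
        have hIfin : I.Finite := (Set.finite_Icc 1 m).subset hIsub
        have hIbdd : BddAbove I := hIfin.bddAbove
        have hIne : I.Nonempty := by
          obtain ⟨P, hP⟩ := hne
          rw [hSI] at hP
          obtain ⟨i, hi, _⟩ := hP
          exact ⟨i, hi⟩
        set i0 := sInf I with hi0
        set j0 := sSup I with hj0
        have hi0I : i0 ∈ I := Nat.sInf_mem hIne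
        have hj0I : j0 ∈ I := Nat.sSup_mem hIne hIbdd
        have hIsub2 : I ⊆ Set.Icc i0 j0 :=
          fun i hi => ⟨Nat.sInf_le hi, le_csSup hIbdd hi⟩
        have hcard : S.ncard ≤ j0 - i0 + 1 := by
          rw [hSI]
          calc (blk '' I).ncard ≤ I.ncard := Set.ncard_image_le hIfin
            _ ≤ (Set.Icc i0 j0).ncard :=
                Set.ncard_le_ncard hIsub2 (Set.finite_Icc _ _)
            _ = j0 - i0 + 1 := by
                rw [← Finset.coe_Icc, Set.ncard_coe_finset, Nat.card_Icc]
                have : i0 ≤ j0 := le_csSup hIbdd hi0I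
                omega
        have hfinal : j0 - i0 + 1 ≤ L := by
          rcases eq_or_lt_of_le (le_csSup hIbdd hi0I : i0 ≤ j0) with heq | hlt
          · have h1 : j0 - i0 + 1 = 1 := by omega
            rw [h1, hL, Nat.le_div_iff_mul_le hC]
            omega
          · -- i0 < j0 : get a clique from a vertex in blk i0 to one in blk j0
            have hi01 : 1 ≤ i0 := hi0I.1
            have hj01 : 1 ≤ j0 := hj0I.1
            obtain ⟨a, ha, haK⟩ := hi0I.2.2
            obtain ⟨b, hb, hbK⟩ := hj0I.2.2
            obtain ⟨k, hk⟩ : ∃ k, i0 = k + 1 := ⟨i0 - 1, by omega⟩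
            obtain ⟨l, hl⟩ : ∃ l, j0 = l + 1 := ⟨j0 - 1, by omega⟩
            rw [hk, hblk' k] at ha
            rw [hl, hblk' l] at hb
            simp only [Set.mem_Icc] at ha hb
            have hklt : k < l := by omega
            have hmk := hmul k
            have hml := hmul l
            have h3 : (k + 1) * C ≤ l * C := Nat.mul_le_mul_right C (by omega)
            have halt : a < b := by omega
            have hadj : G.Adj a b := hK haK hbK (by omega)
            have hcn : b + 1 - a ≤ cliqueNumber G :=
              card_le_cliqueNumber hrange hn humb halt hadj
            rw [hL, Nat.le_div_iff_mul_le hC]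
            -- need (j0 - i0 + 1) * C ≤ ω + C - 1 + C - 1
            have hd : j0 - i0 + 1 = (l - k) + 1 := by omega
            rw [hd]
            obtain ⟨e, he⟩ : ∃ e, l = k + 1 + e := ⟨l - k - 1, by omega⟩
            have hexp : (l - k + 1) * C = e * C + C + C := by
              rw [he]; have : k + 1 + e - k + 1 = e + 2 := by omega
              rw [this]; ring
            have hω2 : e * C + 2 ≤ cliqueNumber G := by
              have h4 : l * C = k * C + C + e * C := by rw [he]; ring
              omega
            omega
        exact le_trans hcard hfinal
  · -- blocks
    rintro P ⟨i, hi1, hi2, rfl⟩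
    obtain ⟨k, rfl⟩ : ∃ k, i = k + 1 := ⟨i - 1, by omega⟩
    rw [hblk' k]
    exact ⟨k * C + 1, min n ((k + 1) * C), by omega, hlb k hi2, rfl⟩
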